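/- As x → 0⁺, F(x) = (x³/√(2eπ)) e^{-1/(2x²)} (1 + O(x²)); that is, the function x ↦ (√(2eπ)/x³) · e^{1/(2x²)} · F(x) − 1 is O(x²) as x → 0⁺. -/

import Mathlib

open Real Set Filter

/-- Standard normal density. -/
noncomputable def stdNormalPDF (x : ℝ) : ℝ :=
  Real.exp (-x ^ 2 / 2) / Real.sqrt (2 * Real.pi)

/-- `F x = ∫_0^x φ(1/v + v/2) dv`. -/
noncomputable def F (x : ℝ) : ℝ :=
  ∫ v in (0 : ℝ)..x, stdNormalPDF (1 / v + v / 2)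

open MeasureTheory intervalIntegral


noncomputable def ff (v : ℝ) : ℝ :=
  if v = 0 then 0 else (1 + 3 * v ^ 2) * Real.exp (-1 / (2 * v ^ 2))

lemma ff_meas : Measurable ff := by
  apply Measurable.ite (measurableSet_singleton 0) measurable_const
  fun_prop

lemma exp_neg_le_inv {t : ℝ} (ht : 0 < t) : Real.exp (-t) ≤ t⁻¹ := by
  rw [Real.exp_neg]
  have h := Real.add_one_le_exp t
  exact inv_anti₀ ht (by linarith)

lemma hasDerivAt_G (v : ℝ) :
    HasDerivAt (fun v : ℝ => v ^ 3 * Real.exp (-1 / (2 * v ^ 2))) (ff v) v := by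
  by_cases hv : v = 0
  · subst hv
    rw [hasDerivAt_iff_tendsto_slope]
    simp only [ff, if_pos rfl]
    refine squeeze_zero_norm' (a := fun v : ℝ => 2 * v ^ 4) ?_ ?_
    · filter_upwards [self_mem_nhdsWithin] with w hw
      have hw' : (w : ℝ) ≠ 0 := hw
      have hw2 : (0:ℝ) < w ^ 2 := by positivity
      rw [slope_def_field]
      have hE : Real.exp (-1 / (2 * w ^ 2)) ≤ 2 * w ^ 2 := by
        have := exp_neg_le_inv (t := 1 / (2 * w ^ 2)) (by positivity)
        rw [show -1 / (2 * w ^ 2) = -(1 / (2 * w ^ 2)) by ring]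
        calc Real.exp (-(1 / (2 * w ^ 2))) ≤ (1 / (2 * w ^ 2))⁻¹ := this
        _ = 2 * w ^ 2 := by field_simp
      have hEpos : 0 < Real.exp (-1 / (2 * w ^ 2)) := Real.exp_pos _
      have : (w ^ 3 * Real.exp (-1 / (2 * w ^ 2)) - 0 ^ 3 * Real.exp (-1 / (2 * 0 ^ 2))) / (w - 0)
          = w ^ 2 * Real.exp (-1 / (2 * w ^ 2)) := by
        field_simp
        ring
      rw [this, norm_mul, norm_eq_abs, norm_eq_abs, abs_of_pos hEpos, abs_of_nonneg (sq_nonneg w)]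
      calc w ^ 2 * Real.exp (-1 / (2 * w ^ 2)) ≤ w ^ 2 * (2 * w ^ 2) := by nlinarith
      _ = 2 * w ^ 4 := by ring
    · have : Continuous (fun v : ℝ => 2 * v ^ 4) := by continuity
      have h := (this.tendsto 0).mono_left (nhdsWithin_le_nhds (s := {(0:ℝ)}ᶜ))
      simpa using h
  · have hv2 : v ^ 2 ≠ 0 := pow_ne_zero 2 hv
    have h1 : HasDerivAt (fun v : ℝ => -1 / (2 * v ^ 2)) (1 / v ^ 3) v := by
      have h := ((hasDerivAt_pow 2 v).inv hv2).const_mul (-1/2 : ℝ)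
      have e1 : (fun v : ℝ => -1 / (2 * v ^ 2)) = fun y => -1 / 2 * (fun x : ℝ => x ^ 2)⁻¹ y := by
        funext w
        simp only [Pi.inv_apply]
        ring
      rw [e1]
      refine h.congr_deriv ?_
      field_simp
      norm_num
    have h3 := h1.exp
    have h4 := (hasDerivAt_pow 3 v).mul h3
    rw [show ff v = (1 + 3 * v ^ 2) * Real.exp (-1 / (2 * v ^ 2)) from if_neg hv]
    refine h4.congr_deriv ?_
    field_simp
    ring

lemma ff_intable {x : ℝ} (hx : 0 ≤ x) : IntervalIntegrable ff volume 0 x := by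
  rw [intervalIntegrable_iff]
  apply Measure.integrableOn_of_bounded (M := 1 + 3 * x ^ 2) measure_Ioc_lt_top.ne
    ff_meas.aestronglyMeasurable
  rw [show (0:ℝ) ⊓ x = 0 from inf_eq_left.mpr hx, show (0:ℝ) ⊔ x = x from sup_eq_right.mpr hx]
  refine (ae_restrict_iff' measurableSet_Ioc).mpr (ae_of_all _ fun v hv => ?_)
  obtain ⟨hv0, hvx⟩ := hv
  rw [show ff v = (1 + 3 * v ^ 2) * Real.exp (-1 / (2 * v ^ 2)) from if_neg hv0.ne']
  have hE : Real.exp (-1 / (2 * v ^ 2)) ≤ 1 := by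
    rw [Real.exp_le_one_iff]
    exact div_nonpos_of_nonpos_of_nonneg (by norm_num) (by positivity)
  have hEpos := Real.exp_pos (-1 / (2 * v ^ 2))
  rw [Real.norm_eq_abs, abs_of_nonneg (by positivity)]
  nlinarith

lemma ftc_ff {x : ℝ} (hx : 0 ≤ x) :
    ∫ v in (0:ℝ)..x, ff v = x ^ 3 * Real.exp (-1 / (2 * x ^ 2)) := by
  have h := intervalIntegral.integral_eq_sub_of_hasDerivAt
    (f := fun v : ℝ => v ^ 3 * Real.exp (-1 / (2 * v ^ 2))) (f' := ff)
    (fun t _ => hasDerivAt_G t) (ff_intable hx)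
  rw [h]
  norm_num

lemma sqrt2epi : Real.sqrt (2 * Real.exp 1 * Real.pi)
    = Real.sqrt (2 * Real.pi) * Real.exp (1/2 : ℝ) := by
  rw [show 2 * Real.exp 1 * Real.pi = 2 * Real.pi * Real.exp 1 by ring,
    Real.sqrt_mul (by positivity), Real.exp_half]

lemma pdf_eq {v : ℝ} (hv : v ≠ 0) :
    stdNormalPDF (1 / v + v / 2)
      = Real.exp (-1 / (2 * v ^ 2) - v ^ 2 / 8) / Real.sqrt (2 * Real.exp 1 * Real.pi) := by
  have h1 : -(1 / v + v / 2) ^ 2 / 2 = (-1 / (2 * v ^ 2) - v ^ 2 / 8) + (-(1/2) : ℝ) := by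
    field_simp
    ring
  rw [stdNormalPDF, h1, Real.exp_add, sqrt2epi]
  rw [show (-(1/2) : ℝ) = -(1/2 : ℝ) by norm_num, Real.exp_neg]
  have h2 : Real.sqrt (2 * Real.pi) ≠ 0 := by positivity
  have h3 : Real.exp (1/2 : ℝ) ≠ 0 := (Real.exp_pos _).ne'
  field_simp

lemma pdf_intable {x : ℝ} (hx : 0 ≤ x) :
    IntervalIntegrable (fun v => stdNormalPDF (1 / v + v / 2)) volume 0 x := by
  rw [intervalIntegrable_iff]
  apply Measure.integrableOn_of_bounded (M := (Real.sqrt (2 * Real.pi))⁻¹) measure_Ioc_lt_top.ne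
  · apply Measurable.aestronglyMeasurable
    unfold stdNormalPDF
    fun_prop
  · refine ae_of_all _ fun v => ?_
    rw [stdNormalPDF, Real.norm_eq_abs, abs_of_nonneg (by positivity), div_eq_mul_inv]
    have h2 : (0:ℝ) < (Real.sqrt (2 * Real.pi))⁻¹ := by positivity
    have h3 : Real.exp (-(1 / v + v / 2) ^ 2 / 2) ≤ 1 := by
      rw [Real.exp_le_one_iff]
      exact div_nonpos_of_nonpos_of_nonneg (neg_nonpos_of_nonneg (sq_nonneg _)) (by norm_num)
    nlinarith

lemma ae_ne_zero : ∀ᵐ v : ℝ, v ≠ 0 := by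
  rw [ae_iff]
  simpa using Real.volume_singleton (a := 0)

lemma F_upper {x : ℝ} (hx : 0 ≤ x) :
    F x ≤ x ^ 3 * Real.exp (-1 / (2 * x ^ 2)) / Real.sqrt (2 * Real.exp 1 * Real.pi) := by
  set s := Real.sqrt (2 * Real.exp 1 * Real.pi) with hs
  have hspos : 0 < s := by rw [hs]; positivity
  have h : F x ≤ ∫ v in (0:ℝ)..x, ff v / s := by
    apply intervalIntegral.integral_mono_ae_restrict hx (pdf_intable hx)
      ((ff_intable hx).div_const s)
    filter_upwards [ae_restrict_of_ae ae_ne_zero] with v hv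
    rw [pdf_eq hv]
    have hE1 : Real.exp (-1 / (2 * v ^ 2) - v ^ 2 / 8) ≤ Real.exp (-1 / (2 * v ^ 2)) :=
      Real.exp_le_exp.mpr (by nlinarith [sq_nonneg v])
    have hE2 : Real.exp (-1 / (2 * v ^ 2)) ≤ ff v := by
      rw [show ff v = (1 + 3 * v ^ 2) * Real.exp (-1 / (2 * v ^ 2)) from if_neg hv]
      nlinarith [Real.exp_pos (-1 / (2 * v ^ 2)), sq_nonneg v]
    exact div_le_div_of_nonneg_right (hE1.trans hE2) hspos.le |>.trans_eq rfl
  calc F x ≤ ∫ v in (0:ℝ)..x, ff v / s := h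
    _ = (∫ v in (0:ℝ)..x, ff v) / s := intervalIntegral.integral_div s ff
    _ = x ^ 3 * Real.exp (-1 / (2 * x ^ 2)) / s := by rw [ftc_ff hx]

lemma F_lower {x : ℝ} (hx : 0 ≤ x) :
    Real.exp (-x^2/8) / (1 + 3 * x ^ 2) * (x ^ 3 * Real.exp (-1 / (2 * x ^ 2)))
      / Real.sqrt (2 * Real.exp 1 * Real.pi) ≤ F x := by
  set s := Real.sqrt (2 * Real.exp 1 * Real.pi) with hs
  have hspos : 0 < s := by rw [hs]; positivity
  set c := Real.exp (-x^2/8) / (1 + 3 * x ^ 2) with hc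
  have hcpos : 0 < c := by rw [hc]; positivity
  have h : (∫ v in (0:ℝ)..x, c * ff v / s) ≤ F x := by
    apply intervalIntegral.integral_mono_ae_restrict hx
      (((ff_intable hx).const_mul c).div_const s) (pdf_intable hx)
    filter_upwards [ae_restrict_of_ae ae_ne_zero, ae_restrict_mem measurableSet_Icc]
      with v hv hmem
    obtain ⟨hv0, hvx⟩ := hmem
    rw [pdf_eq hv]
    apply div_le_div_of_nonneg_right _ hspos.le
    rw [show ff v = (1 + 3 * v ^ 2) * Real.exp (-1 / (2 * v ^ 2)) from if_neg hv, hc]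
    have hvx2 : v ^ 2 ≤ x ^ 2 := by nlinarith
    have h1 : Real.exp (-x^2/8) ≤ Real.exp (-v^2/8) := Real.exp_le_exp.mpr (by linarith)
    have h2 : (1 + 3 * v ^ 2) ≤ (1 + 3 * x ^ 2) := by nlinarith
    have h3 : Real.exp (-1 / (2 * v ^ 2) - v ^ 2 / 8)
        = Real.exp (-1 / (2 * v ^ 2)) * Real.exp (-v^2/8) := by
      rw [← Real.exp_add]; ring_nf
    rw [h3]
    rw [div_mul_eq_mul_div, div_le_iff₀ (by positivity)]
    have hEpos := (Real.exp_pos (-1 / (2 * v ^ 2))).le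
    have hepos := (Real.exp_pos (-x^2/8)).le
    nlinarith [mul_le_mul_of_nonneg_left h1 hEpos,
      mul_le_mul_of_nonneg_right h2 (mul_nonneg hEpos (Real.exp_pos (-v^2/8)).le)]
  calc c * (x ^ 3 * Real.exp (-1 / (2 * x ^ 2))) / s
      = (c * ∫ v in (0:ℝ)..x, ff v) / s := by rw [ftc_ff hx]
    _ = ∫ v in (0:ℝ)..x, c * ff v / s := by
        rw [← intervalIntegral.integral_const_mul, ← intervalIntegral.integral_div]
    _ ≤ F x := h

/-- `F(x) = (x³/√(2eπ)) e^{-1/(2x²)} (1 + O(x²))` as `x → 0⁺`. -/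
theorem F_asymptotics :
    (fun x : ℝ =>
        Real.sqrt (2 * Real.exp 1 * Real.pi) / x ^ 3 * Real.exp (1 / (2 * x ^ 2)) *
          F x - 1)
      =O[nhdsWithin 0 (Set.Ioi 0)] (fun x : ℝ => x ^ 2) := by
  rw [Asymptotics.isBigO_iff]
  refine ⟨4, ?_⟩
  filter_upwards [self_mem_nhdsWithin] with x hx
  have hx0 : (0:ℝ) < x := hx
  set s := Real.sqrt (2 * Real.exp 1 * Real.pi) with hs
  have hspos : 0 < s := by rw [hs]; positivity
  set P := s / x ^ 3 * Real.exp (1 / (2 * x ^ 2)) with hP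
  have hPpos : 0 < P := by rw [hP]; positivity
  have hinv : Real.exp (1 / (2 * x ^ 2)) * Real.exp (-1 / (2 * x ^ 2)) = 1 := by
    rw [← Real.exp_add, show 1 / (2 * x ^ 2) + -1 / (2 * x ^ 2) = 0 by ring, Real.exp_zero]
  have hkey : P * (x ^ 3 * Real.exp (-1 / (2 * x ^ 2)) / s) = 1 := by
    rw [hP]
    field_simp
    rw [← Real.exp_add, add_neg_cancel, Real.exp_zero]
  have hA1 : P * F x ≤ 1 := by
    calc P * F x ≤ P * (x ^ 3 * Real.exp (-1 / (2 * x ^ 2)) / s) :=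
          mul_le_mul_of_nonneg_left (F_upper hx0.le) hPpos.le
      _ = 1 := hkey
  have hA2 : Real.exp (-x^2/8) / (1 + 3 * x ^ 2) ≤ P * F x := by
    calc Real.exp (-x^2/8) / (1 + 3 * x ^ 2)
        = Real.exp (-x^2/8) / (1 + 3 * x ^ 2) * (P * (x ^ 3 * Real.exp (-1 / (2 * x ^ 2)) / s)) := by
          rw [hkey]; ring
      _ = P * (Real.exp (-x^2/8) / (1 + 3 * x ^ 2) * (x ^ 3 * Real.exp (-1 / (2 * x ^ 2))) / s) := by
          ring
      _ ≤ P * F x := mul_le_mul_of_nonneg_left (F_lower hx0.le) hPpos.le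
  have hE : 1 - x^2/8 ≤ Real.exp (-x^2/8) := by
    have := Real.add_one_le_exp (-x^2/8)
    linarith
  have hq : 1 + 3 * x ^ 2 > 0 := by positivity
  have hlow : 1 - 4 * x ^ 2 ≤ Real.exp (-x^2/8) / (1 + 3 * x ^ 2) := by
    rw [le_div_iff₀ hq]
    nlinarith [sq_nonneg x, sq_nonneg (x^2)]
  have habs : |P * F x - 1| ≤ 4 * x ^ 2 := by
    rw [abs_le]
    constructor <;> nlinarith
  calc ‖P * F x - 1‖ = |P * F x - 1| := rfl
    _ ≤ 4 * x ^ 2 := habs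
    _ = 4 * ‖x ^ 2‖ := by rw [Real.norm_eq_abs, abs_of_nonneg (sq_nonneg x)]
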